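/- arXiv:2302.11615 — 2 statements merged into one kernel-verified Lean document; each statement's English description precedes it below -/
import Mathlib

section
/- Let X be a strongly causal, non-timelike locally isolating, and chronological Lorentzian pre-length space with timelike curvature bounded above by 0. Then X is covered by timelike (≤0)-comparison neighbourhoods U on which τ is finite, i.e. τ(p,q) < ∞ for all p, q ∈ U; in particular, on such a neighbourhood τ is finite and continuous on all of U × U, every pair x ≪ y in U is joined by a geodesic contained in U, and every timelike triangle contained in U satisfies size bounds for 𝕃²(0). (This is the K = 0 case of the automatic size bounds lemma.) -/
open Set Topology Filter
open scoped ENNReal NNReal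

/-- A Lorentzian pre-length space: a metric space `X` together with a chronological
relation `≪`, a causal relation `≤` and a time separation function `τ : X × X → [0,∞]`. -/
structure LorentzPLS (X : Type*) [MetricSpace X] where
  chron : X → X → Prop
  causal : X → X → Prop
  tau : X → X → ℝ≥0∞
  causal_refl : ∀ x, causal x x
  causal_trans : ∀ {x y z}, causal x y → causal y z → causal x z
  chron_trans : ∀ {x y z}, chron x y → chron y z → chron x z
  chron_le_causal : ∀ {x y}, chron x y → causal x y
  tau_lsc : LowerSemicontinuous fun p : X × X => tau p.1 p.2
  tau_rev_triangle : ∀ {x y z}, causal x y → causal y z → tau x y + tau y z ≤ tau x z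
  tau_pos_iff : ∀ x y, 0 < tau x y ↔ chron x y

namespace LorentzPLS

variable {X : Type*} [MetricSpace X]

/-- Timelike future. -/
def Ifut (L : LorentzPLS X) (x : X) : Set X := {y | L.chron x y}

/-- Timelike past. -/
def Ipast (L : LorentzPLS X) (x : X) : Set X := {y | L.chron y x}

/-- Timelike diamond `I(p,q)`. -/
def diamond (L : LorentzPLS X) (p q : X) : Set X := L.Ifut p ∩ L.Ipast q

/-- Strong causality: the timelike diamonds form a subbasis for the metric topology. -/
def StronglyCausal (L : LorentzPLS X) : Prop :=
  TopologicalSpace.generateFrom {s : Set X | ∃ p q : X, s = L.diamond p q}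
    = (inferInstance : TopologicalSpace X)

/-- Non-timelike local isolation. -/
def NonTimelikeLocallyIsolating (L : LorentzPLS X) : Prop :=
  (∀ a : X, (L.Ifut a).Nonempty → ∀ U ∈ 𝓝 a, ∃ b ∈ U, L.chron a b) ∧
  (∀ a : X, (L.Ipast a).Nonempty → ∀ U ∈ 𝓝 a, ∃ b ∈ U, L.chron b a)

/-- Chronology: no point is timelike related to itself. -/
def Chronological (L : LorentzPLS X) : Prop := ∀ x : X, ¬ L.chron x x

/-- A future-directed causal curve, parameterized on `[0,1]`
(locally Lipschitz on the compact interval `[0,1]`, i.e. Lipschitz there). -/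
structure IsCausalCurve (L : LorentzPLS X) (γ : ℝ → X) : Prop where
  lip : ∃ K : ℝ≥0, LipschitzOnWith K γ (Icc 0 1)
  mono : ∀ ⦃s t : ℝ⦄, s ∈ Icc (0:ℝ) 1 → t ∈ Icc (0:ℝ) 1 → s < t → L.causal (γ s) (γ t)

/-- A future-directed timelike curve, parameterized on `[0,1]`. -/
structure IsTimelikeCurve (L : LorentzPLS X) (γ : ℝ → X) : Prop where
  lip : ∃ K : ℝ≥0, LipschitzOnWith K γ (Icc 0 1)
  mono : ∀ ⦃s t : ℝ⦄, s ∈ Icc (0:ℝ) 1 → t ∈ Icc (0:ℝ) 1 → s < t → L.chron (γ s) (γ t)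

/-- The τ-length of a curve on `[0,1]`: the infimum over partitions
`0 = t₀ < t₁ < ⋯ < tₙ = 1` of `Σᵢ τ(γ(tᵢ), γ(tᵢ₊₁))`. -/
noncomputable def tauLength (L : LorentzPLS X) (γ : ℝ → X) : ℝ≥0∞ :=
  ⨅ (n : ℕ) (f : Fin (n + 1) → ℝ)
    (_ : f 0 = 0 ∧ f (Fin.last n) = 1 ∧ StrictMono f),
    ∑ i : Fin n, L.tau (γ (f i.castSucc)) (γ (f i.succ))

/-- A geodesic (distance realizer) from `x` to `y`, parameterized on `[0,1]`. -/
def IsGeodesic (L : LorentzPLS X) (x y : X) (γ : ℝ → X) : Prop :=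
  L.IsCausalCurve γ ∧ γ 0 = x ∧ γ 1 = y ∧ L.tauLength γ = L.tau x y

/-- Regularity: geodesics between timelike related points are timelike. -/
def Regular (L : LorentzPLS X) : Prop :=
  ∀ (x y : X) (γ : ℝ → X), L.chron x y → L.IsGeodesic x y γ → L.IsTimelikeCurve γ

/-- A geodesic parameterized on `[0,1]` with constant speed. -/
def IsConstSpeedGeodesic (L : LorentzPLS X) (x y : X) (γ : ℝ → X) : Prop :=
  L.IsGeodesic x y γ ∧
  ∀ ⦃s t : ℝ⦄, s ∈ Icc (0:ℝ) 1 → t ∈ Icc (0:ℝ) 1 → s ≤ t →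
    L.tau (γ s) (γ t) = ENNReal.ofReal (t - s) * L.tau x y

end LorentzPLS

/-- Causal relation of the Minkowski plane 𝕃²(0). -/
def minkLe (p q : ℝ × ℝ) : Prop := |q.2 - p.2| ≤ q.1 - p.1

/-- Chronological relation of the Minkowski plane 𝕃²(0). -/
def minkLt (p q : ℝ × ℝ) : Prop := |q.2 - p.2| < q.1 - p.1

open Classical in
/-- Time separation of the Minkowski plane 𝕃²(0). -/
noncomputable def minkTau (p q : ℝ × ℝ) : ℝ≥0∞ :=
  if minkLe p q then ENNReal.ofReal (Real.sqrt ((q.1 - p.1) ^ 2 - (q.2 - p.2) ^ 2)) else 0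

namespace LorentzPLS

variable {X : Type*} [MetricSpace X]

/-- A timelike triangle `Δ(x,y,z)`: three timelike related points together with
pairwise connecting geodesics. -/
structure TimelikeTriangle (L : LorentzPLS X) where
  x : X
  y : X
  z : X
  gxy : ℝ → X
  gyz : ℝ → X
  gxz : ℝ → X
  hxy : L.chron x y
  hyz : L.chron y z
  geo_xy : L.IsGeodesic x y gxy
  geo_yz : L.IsGeodesic y z gyz
  geo_xz : L.IsGeodesic x z gxz

/-- The triangle is contained in `U`. -/
def TriangleIn (L : LorentzPLS X) (T : TimelikeTriangle L) (U : Set X) : Prop :=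
  (∀ t ∈ Icc (0:ℝ) 1, T.gxy t ∈ U) ∧ (∀ t ∈ Icc (0:ℝ) 1, T.gyz t ∈ U) ∧
  (∀ t ∈ Icc (0:ℝ) 1, T.gxz t ∈ U)

/-- A comparison triangle in 𝕃²(0) for the timelike triangle `T`. -/
def IsComparisonTriangle (L : LorentzPLS X) (T : TimelikeTriangle L)
    (xb yb zb : ℝ × ℝ) : Prop :=
  minkLt xb yb ∧ minkLt yb zb ∧
  minkTau xb yb = L.tau T.x T.y ∧ minkTau yb zb = L.tau T.y T.z ∧
  minkTau xb zb = L.tau T.x T.z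

/-- `rb` is a comparison point (in the comparison triangle `(xb,yb,zb)` in 𝕃²(0))
for a point `r` on one of the sides of the triangle `T`. -/
def IsComparisonPoint (L : LorentzPLS X) (T : TimelikeTriangle L)
    (xb yb zb : ℝ × ℝ) (r : X) (rb : ℝ × ℝ) : Prop :=
  ((∃ t ∈ Icc (0:ℝ) 1, T.gxy t = r) ∧ rb ∈ segment ℝ xb yb ∧
    minkTau xb rb = L.tau T.x r ∧ minkTau rb yb = L.tau r T.y) ∨
  ((∃ t ∈ Icc (0:ℝ) 1, T.gyz t = r) ∧ rb ∈ segment ℝ yb zb ∧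
    minkTau yb rb = L.tau T.y r ∧ minkTau rb zb = L.tau r T.z) ∨
  ((∃ t ∈ Icc (0:ℝ) 1, T.gxz t = r) ∧ rb ∈ segment ℝ xb zb ∧
    minkTau xb rb = L.tau T.x r ∧ minkTau rb zb = L.tau r T.z)

/-- The triangle `T` satisfies the comparison condition with upper bound 0:
for any comparison triangle and any comparison points, `τ(r,s) ≤ τ̄(r̄,s̄)`. -/
def SatisfiesComparison (L : LorentzPLS X) (T : TimelikeTriangle L) : Prop :=
  ∀ xb yb zb : ℝ × ℝ, L.IsComparisonTriangle T xb yb zb →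
    ∀ (r s : X) (rb sb : ℝ × ℝ), L.IsComparisonPoint T xb yb zb r rb →
      L.IsComparisonPoint T xb yb zb s sb →
      L.tau r s ≤ minkTau rb sb

/-- Condition (i) of the (≤0)-comparison neighbourhood definition. -/
def Cond1 (L : LorentzPLS X) (U : Set X) : Prop :=
  IsOpen ((U ×ˢ U) ∩ {pq : X × X | L.tau pq.1 pq.2 < ⊤}) ∧
  ContinuousOn (fun pq : X × X => L.tau pq.1 pq.2)
    ((U ×ˢ U) ∩ {pq : X × X | L.tau pq.1 pq.2 < ⊤})

/-- Condition (ii) of the (≤0)-comparison neighbourhood definition. -/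
def Cond2 (L : LorentzPLS X) (U : Set X) : Prop :=
  ∀ a ∈ U, ∀ b ∈ U, L.chron a b → L.tau a b < ⊤ →
    ∃ γ : ℝ → X, L.IsGeodesic a b γ ∧ ∀ t ∈ Icc (0:ℝ) 1, γ t ∈ U

/-- Condition (iii) of the (≤0)-comparison neighbourhood definition. -/
def Cond3 (L : LorentzPLS X) (U : Set X) : Prop :=
  ∀ T : TimelikeTriangle L, L.TriangleIn T U → L.tau T.x T.z < ⊤ →
    L.SatisfiesComparison T

/-- A timelike (≤0)-comparison neighbourhood. -/
structure IsComparisonNbhdLeq0 (L : LorentzPLS X) (U : Set X) : Prop where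
  isOpen : IsOpen U
  cond1 : L.Cond1 U
  cond2 : L.Cond2 U
  cond3 : L.Cond3 U

/-- Timelike curvature bounded above by 0: `X` is covered by
timelike (≤0)-comparison neighbourhoods. -/
def CurvBoundedAboveZero (L : LorentzPLS X) : Prop :=
  ∀ x : X, ∃ U : Set X, x ∈ U ∧ L.IsComparisonNbhdLeq0 U

end LorentzPLS

/-- **Automatic size bounds (K = 0).** A strongly causal, non-timelike locally isolating
and chronological Lorentzian pre-length space with timelike curvature bounded above
by 0 is covered by timelike (≤0)-comparison neighbourhoods `U` on which `τ` is finite;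
in particular, on such `U`, `τ` is finite and continuous on all of `U × U`, every pair
`x ≪ y` in `U` is joined by a geodesic contained in `U`, and every timelike triangle
contained in `U` satisfies size bounds for 𝕃²(0). -/
theorem automatic_size_bounds {X : Type*} [MetricSpace X] (L : LorentzPLS X)
    (hsc : L.StronglyCausal) (hnt : L.NonTimelikeLocallyIsolating)
    (hchron : L.Chronological) (hcurv : L.CurvBoundedAboveZero) :
    ∀ x : X, ∃ U : Set X, x ∈ U ∧ L.IsComparisonNbhdLeq0 U ∧
      (∀ p ∈ U, ∀ q ∈ U, L.tau p q < ⊤) ∧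
      ContinuousOn (fun pq : X × X => L.tau pq.1 pq.2) (U ×ˢ U) ∧
      (∀ p ∈ U, ∀ q ∈ U, L.chron p q →
        ∃ γ : ℝ → X, L.IsGeodesic p q γ ∧ ∀ t ∈ Set.Icc (0:ℝ) 1, γ t ∈ U) ∧
      (∀ T : LorentzPLS.TimelikeTriangle L, L.TriangleIn T U → L.tau T.x T.z < ⊤) := by
  intro x
  obtain ⟨V, hxV, hV⟩ := hcurv x
  -- push-up lemma
  have pushup : ∀ {p a r : X}, L.chron p a → L.causal a r → L.chron p r := by
    intro p a r hpa har
    have h1 : 0 < L.tau p a := (L.tau_pos_iff p a).2 hpa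
    have h2 : L.tau p a ≤ L.tau p r := by
      calc L.tau p a ≤ L.tau p a + L.tau a r := le_self_add
        _ ≤ L.tau p r := L.tau_rev_triangle (L.chron_le_causal hpa) har
    exact (L.tau_pos_iff p r).1 (lt_of_lt_of_le h1 h2)
  have pushdown : ∀ {r b q : X}, L.causal r b → L.chron b q → L.chron r q := by
    intro r b q hrb hbq
    have h1 : 0 < L.tau b q := (L.tau_pos_iff b q).2 hbq
    have h2 : L.tau b q ≤ L.tau r q := by
      calc L.tau b q ≤ L.tau r b + L.tau b q := le_add_self
        _ ≤ L.tau r q := L.tau_rev_triangle hrb (L.chron_le_causal hbq)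
    exact (L.tau_pos_iff r q).1 (lt_of_lt_of_le h1 h2)
  have htxx : L.tau x x < ⊤ := by
    have h0 : ¬ 0 < L.tau x x := fun h => hchron x ((L.tau_pos_iff x x).1 h)
    have : L.tau x x = 0 := by simpa [pos_iff_ne_zero] using h0
    simp [this]
  have hW : IsOpen ((V ×ˢ V) ∩ {pq : X × X | L.tau pq.1 pq.2 < ⊤}) := hV.cond1.1
  have hxW : (x, x) ∈ (V ×ˢ V) ∩ {pq : X × X | L.tau pq.1 pq.2 < ⊤} :=
    ⟨⟨hxV, hxV⟩, htxx⟩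
  obtain ⟨U1, U2, hU1, hU2, hx1, hx2, hsub⟩ := isOpen_prod_iff.1 hW x x hxW
  have hW'open : IsOpen (U1 ∩ U2) := hU1.inter hU2
  have hxW' : x ∈ U1 ∩ U2 := ⟨hx1, hx2⟩
  have hW'sq : ∀ p ∈ U1 ∩ U2, ∀ q ∈ U1 ∩ U2, (p ∈ V ∧ q ∈ V) ∧ L.tau p q < ⊤ := by
    intro p hp q hq
    have := hsub (Set.mk_mem_prod hp.1 hq.2)
    exact ⟨⟨this.1.1, this.1.2⟩, this.2⟩
  have hbasis := TopologicalSpace.isTopologicalBasis_of_subbasis hsc.symm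
  obtain ⟨B, hBmem, hxB, hBsub⟩ := hbasis.exists_subset_of_mem_open hxW' hW'open
  have hBopen : IsOpen B := hbasis.isOpen hBmem
  obtain ⟨f, ⟨hfin, hfsub⟩, rfl⟩ := hBmem
  -- basic facts about B
  have hBV : ∀ p ∈ ⋂₀ f, p ∈ V := fun p hp => ((hW'sq p (hBsub hp) p (hBsub hp)).1).1
  have hBfin : ∀ p ∈ ⋂₀ f, ∀ q ∈ ⋂₀ f, L.tau p q < ⊤ := fun p hp q hq =>
    (hW'sq p (hBsub hp) q (hBsub hq)).2
  -- points causally between two points of B lie in B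
  have hBetween : ∀ a ∈ ⋂₀ f, ∀ b ∈ ⋂₀ f, ∀ r : X,
      L.causal a r → L.causal r b → r ∈ ⋂₀ f := by
    intro a ha b hb r har hrb s hs
    obtain ⟨p, q, rfl⟩ := hfsub hs
    have hap : a ∈ L.diamond p q := ha _ hs
    have hbp : b ∈ L.diamond p q := hb _ hs
    exact ⟨pushup hap.1 har, pushdown hrb hbp.2⟩
  -- geodesics between points of B stay in B
  have hGeoIn : ∀ a ∈ ⋂₀ f, ∀ b ∈ ⋂₀ f, ∀ γ : ℝ → X,
      L.IsGeodesic a b γ → ∀ t ∈ Icc (0:ℝ) 1, γ t ∈ ⋂₀ f := by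
    intro a ha b hb γ hγ t ht
    have har : L.causal a (γ t) := by
      rcases eq_or_lt_of_le ht.1 with h | h
      · rw [← h, hγ.2.1]; exact L.causal_refl _
      · rw [← hγ.2.1]
        exact hγ.1.mono ⟨le_refl 0, zero_le_one⟩ ht h
    have hrb : L.causal (γ t) b := by
      rcases eq_or_lt_of_le ht.2 with h | h
      · rw [h, hγ.2.2.1]; exact L.causal_refl _
      · rw [← hγ.2.2.1]
        exact hγ.1.mono ht ⟨zero_le_one, le_refl 1⟩ h
    exact hBetween a ha b hb _ har hrb
  -- the finiteness set over B is all of B × B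
  have hBset : ((⋂₀ f) ×ˢ (⋂₀ f)) ∩ {pq : X × X | L.tau pq.1 pq.2 < ⊤}
      = (⋂₀ f) ×ˢ (⋂₀ f) := by
    apply Set.inter_eq_self_of_subset_left
    rintro ⟨p, q⟩ ⟨hp, hq⟩
    exact hBfin p hp q hq
  have hsubV : ((⋂₀ f) ×ˢ (⋂₀ f)) ∩ {pq : X × X | L.tau pq.1 pq.2 < ⊤}
      ⊆ (V ×ˢ V) ∩ {pq : X × X | L.tau pq.1 pq.2 < ⊤} := by
    rintro ⟨p, q⟩ ⟨⟨hp, hq⟩, hfin'⟩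
    exact ⟨⟨hBV p hp, hBV q hq⟩, hfin'⟩
  have hcont : ContinuousOn (fun pq : X × X => L.tau pq.1 pq.2) ((⋂₀ f) ×ˢ (⋂₀ f)) := by
    have := hV.cond1.2.mono hsubV
    rwa [hBset] at this
  have hcond2 : L.Cond2 (⋂₀ f) := by
    intro a ha b hb hab _
    obtain ⟨γ, hγ, _⟩ := hV.cond2 a (hBV a ha) b (hBV b hb) hab (hBfin a ha b hb)
    exact ⟨γ, hγ, hGeoIn a ha b hb γ hγ⟩
  refine ⟨⋂₀ f, hxB, ⟨hBopen, ⟨?_, ?_⟩, hcond2, ?_⟩, hBfin, hcont, ?_, ?_⟩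
  · rw [hBset]; exact hBopen.prod hBopen
  · rw [hBset]; exact hcont
  · intro T hT hfin'
    refine hV.cond3 T ⟨?_, ?_, ?_⟩ hfin'
    · exact fun t ht => hBV _ (hT.1 t ht)
    · exact fun t ht => hBV _ (hT.2.1 t ht)
    · exact fun t ht => hBV _ (hT.2.2 t ht)
  · intro p hp q hq hpq
    exact hcond2 p hp q hq hpq (hBfin p hp q hq)
  · intro T hT
    have hx' : T.x ∈ ⋂₀ f := by
      have := hT.2.2 0 ⟨le_refl 0, zero_le_one⟩
      rwa [T.geo_xz.2.1] at this
    have hz' : T.z ∈ ⋂₀ f := by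
      have := hT.2.2 1 ⟨zero_le_one, le_refl 1⟩
      rwa [T.geo_xz.2.2.1] at this
    exact hBfin _ hx' _ hz'
end

section
/- Let t, m, p, q be real numbers with π/2 < t < π, 0 < cos((p−q)/2), cos((p−q)/2) < cos(m), 0 ≤ p + q ≤ 2π, and cos(m)·cos(t) = cos((p+q)/2)·cos((p−q)/2). Then p + q > 2t. (This is the key trigonometric inequality in the proof of the bound on the finite diameter of Lorentzian pre-length spaces with global timelike curvature bounded below by −1, obtained from the hyperbolic law of cosines in anti-de Sitter space.) -/
/-- **Key trigonometric inequality in the Lorentzian Bonnet–Myers bound.** If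
`π/2 < t < π`, `0 < cos((p−q)/2) < cos m`, `0 ≤ p + q ≤ 2π`, and
`cos m · cos t = cos((p+q)/2) · cos((p−q)/2)`, then `p + q > 2t`. -/
theorem bonnet_myers_trig_inequality (t m p q : ℝ)
    (ht1 : Real.pi / 2 < t) (ht2 : t < Real.pi)
    (h1 : 0 < Real.cos ((p - q) / 2))
    (h2 : Real.cos ((p - q) / 2) < Real.cos m)
    (h3 : 0 ≤ p + q) (h4 : p + q ≤ 2 * Real.pi)
    (h5 : Real.cos m * Real.cos t = Real.cos ((p + q) / 2) * Real.cos ((p - q) / 2)) :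
    2 * t < p + q := by
  have hct : Real.cos t < 0 := Real.cos_neg_of_pi_div_two_lt_of_lt ht1 (by linarith [Real.pi_pos])
  have hlt : Real.cos ((p + q) / 2) < Real.cos t := by
    have := mul_lt_mul_of_neg_right h2 hct
    rw [h5] at this
    nlinarith
  have hmem1 : (p + q) / 2 ∈ Set.Icc 0 Real.pi := ⟨by linarith, by linarith⟩
  have hmem2 : t ∈ Set.Icc 0 Real.pi := ⟨by linarith [Real.pi_pos], le_of_lt ht2⟩
  have := (Real.strictAntiOn_cos.lt_iff_gt hmem1 hmem2).mp hlt
  linarith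
end
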